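/- A candidate x is a unique Schulze winner (the only candidate z with S[ω](z,y) ≥ S[ω](y,z) for all y ≠ z) if and only if S[ω](x,y) > S[ω](y,x) for all y ≠ x. -/

import Mathlib

open scoped Classical

namespace Schulze

def pstr {X : Type} (ω : X → X → WithTop ℤ) : List X → WithTop ℤ
  | a :: b :: l => min (ω a b) (pstr ω (b :: l))
  | _ => ⊤

def IsPath {X : Type} (x y : X) (p : List X) : Prop :=
  p.Nodup ∧ p.head? = some x ∧ p.getLast? = some y

noncomputable def S {X : Type} [Fintype X] [DecidableEq X]
    (ω : X → X → WithTop ℤ) (x y : X) : WithBot (WithTop ℤ) :=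
  (Finset.univ.filter (fun p : {l : List X // l.Nodup} => IsPath x y p.1)).sup
    (fun p => ((pstr ω p.1 : WithTop ℤ) : WithBot (WithTop ℤ)))

def ofInt {X : Type} (ω : X → X → ℤ) : X → X → WithTop ℤ := fun x y => (ω x y : ℤ)

lemma pstr_append {X : Type} (ω : X → X → WithTop ℤ) (a : X) : ∀ (s t : List X),
    pstr ω (s ++ a :: t) = min (pstr ω (s ++ [a])) (pstr ω (a :: t))
  | [], t => by simp [pstr]
  | [x], t => by simp [pstr, min_assoc]
  | x :: y :: s, t => by
    have := pstr_append ω a (y :: s) t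
    simp only [List.cons_append] at this ⊢
    rw [pstr, pstr, this, min_assoc]

lemma exists_dup {X : Type} : ∀ {l : List X}, ¬ l.Nodup →
    ∃ a l₁ l₂ l₃, l = (l₁ ++ a :: l₂) ++ a :: l₃ := by
  intro l h
  induction l with
  | nil => simp at h
  | cons x t ih =>
    rw [List.nodup_cons] at h
    push_neg at h
    by_cases hx : x ∈ t
    · obtain ⟨s, u, rfl⟩ := List.append_of_mem hx
      exact ⟨x, [], s, u, by simp⟩
    · obtain ⟨a, l₁, l₂, l₃, rfl⟩ := ih (h hx)
      exact ⟨a, x :: l₁, l₂, l₃, by simp⟩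

lemma exists_nodup_path {X : Type} (ω : X → X → WithTop ℤ) :
    ∀ (n : ℕ) (p : List X) (x y : X), p.length ≤ n → p.head? = some x →
      p.getLast? = some y →
      ∃ q : List X, q.Nodup ∧ q.head? = some x ∧ q.getLast? = some y ∧
        pstr ω p ≤ pstr ω q := by
  intro n
  induction n with
  | zero =>
    intro p x y hlen hh _
    have : p = [] := by simpa using hlen
    subst this; simp at hh
  | succ n ih =>
    intro p x y hlen hh hl
    by_cases hnd : p.Nodup
    · exact ⟨p, hnd, hh, hl, le_refl _⟩
    · obtain ⟨a, l₁, l₂, l₃, rfl⟩ := exists_dup hnd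
      have hcl : ((a :: l₃) : List X).getLast? = some ((a :: l₃).getLast (by simp)) :=
        List.getLast?_eq_getLast (by simp)
      have hh' : (l₁ ++ a :: l₃).head? = some x := by
        rw [List.head?_append] at hh ⊢
        rw [List.head?_append, Option.or_assoc] at hh
        simpa using hh
      have hl' : (l₁ ++ a :: l₃).getLast? = some y := by
        rw [List.getLast?_append]
        rw [List.getLast?_append, List.getLast?_append, hcl] at hl
        rw [show ∀ (b : X) (o : Option X), (some b).or o = some b from fun _ _ => rfl] at hl
        rw [hcl, hl]
        rfl
      have hlen' : (l₁ ++ a :: l₃).length ≤ n := by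
        simp only [List.length_append, List.length_cons] at hlen ⊢
        omega
      have hstr : pstr ω ((l₁ ++ a :: l₂) ++ a :: l₃) ≤ pstr ω (l₁ ++ a :: l₃) := by
        have e1 := pstr_append ω a (l₁ ++ a :: l₂) l₃
        have e2 := pstr_append ω a l₁ l₃
        have e4 := pstr_append ω a l₁ (l₂ ++ [a])
        rw [show ((l₁ ++ a :: l₂) ++ [a]) = l₁ ++ a :: (l₂ ++ [a]) by simp, e4] at e1
        rw [e1, e2]
        exact min_le_min (min_le_left _ _) (le_refl _)
      obtain ⟨q, h1, h2, h3, h4⟩ := ih (l₁ ++ a :: l₃) x y hlen' hh' hl'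
      exact ⟨q, h1, h2, h3, le_trans hstr h4⟩

variable {X : Type} [Fintype X] [DecidableEq X]

lemma le_S (ω : X → X → WithTop ℤ) {a b : X} {p : List X} (hnd : p.Nodup)
    (h : IsPath a b p) :
    ((pstr ω p : WithTop ℤ) : WithBot (WithTop ℤ)) ≤ S ω a b :=
  Finset.le_sup (f := fun p : {l : List X // l.Nodup} =>
    ((pstr ω p.1 : WithTop ℤ) : WithBot (WithTop ℤ)))
    (b := ⟨p, hnd⟩) (by simp [Finset.mem_filter, h])

lemma S_cases (ω : X → X → WithTop ℤ) (a b : X) : S ω a b = ⊥ ∨ ∃ p : List X, IsPath a b p ∧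
    S ω a b = ((pstr ω p : WithTop ℤ) : WithBot (WithTop ℤ)) := by
  rcases Finset.eq_empty_or_nonempty
      (Finset.univ.filter (fun p : {l : List X // l.Nodup} => IsPath a b p.1)) with h | h
  · left; rw [S, h]; rfl
  · right
    obtain ⟨p, hp, hsup⟩ := Finset.exists_mem_eq_sup _ h
      (fun p : {l : List X // l.Nodup} => ((pstr ω p.1 : WithTop ℤ) : WithBot (WithTop ℤ)))
    exact ⟨p.1, (Finset.mem_filter.1 hp).2, hsup⟩

lemma S_triangle (ω : X → X → WithTop ℤ) (a b c : X) :
    min (S ω a b) (S ω b c) ≤ S ω a c := by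
  rcases S_cases ω a b with h | ⟨p, ⟨hpn, hph, hpl⟩, hab⟩
  · rw [h]; simp
  rcases S_cases ω b c with h | ⟨q, ⟨hqn, hqh, hql⟩, hbc⟩
  · rw [h]; simp
  obtain ⟨t, rfl⟩ : ∃ t, q = b :: t := by
    cases q with
    | nil => simp at hqh
    | cons u t =>
      simp only [List.head?_cons, Option.some.injEq] at hqh
      subst hqh; exact ⟨t, rfl⟩
  have hpne : p ≠ [] := by rintro rfl; simp at hph
  set w : List X := p ++ t with hw
  have hwh : w.head? = some a := by
    rw [hw, List.head?_append, hph]; rfl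
  have hwl : w.getLast? = some c := by
    cases t with
    | nil =>
      have : b = c := by simpa using hql
      rw [hw, List.append_nil, hpl, this]
    | cons u t' =>
      rw [hw, List.getLast?_append]
      have h1 : (u :: t').getLast? = some ((u :: t').getLast (by simp)) :=
        List.getLast?_eq_getLast (by simp)
      have h2 : (b :: u :: t').getLast? = (u :: t').getLast? := by
        rw [show (b :: u :: t') = [b] ++ (u :: t') by simp, List.getLast?_append, h1]; rfl
      rw [h1]
      rw [h2, h1] at hql
      rw [hql]; rfl
  have hpd : p = p.dropLast ++ [b] := by
    conv_lhs => rw [← List.dropLast_append_getLast hpne]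
    have : p.getLast hpne = b := by
      rw [List.getLast?_eq_getLast hpne] at hpl
      exact Option.some.inj hpl
    rw [this]
  have hwstr : pstr ω w = min (pstr ω p) (pstr ω (b :: t)) := by
    rw [hw]
    conv_lhs => rw [hpd]
    rw [show (p.dropLast ++ [b]) ++ t = p.dropLast ++ b :: t by simp,
      pstr_append, ← hpd]
  obtain ⟨r, hrn, hrh, hrl, hrs⟩ := exists_nodup_path ω w.length w a c le_rfl hwh hwl
  calc min (S ω a b) (S ω b c)
      = ((min (pstr ω p) (pstr ω (b :: t)) : WithTop ℤ) : WithBot (WithTop ℤ)) := by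
        rw [hab, hbc, WithBot.coe_min]
    _ = ((pstr ω w : WithTop ℤ) : WithBot (WithTop ℤ)) := by rw [hwstr]
    _ ≤ ((pstr ω r : WithTop ℤ) : WithBot (WithTop ℤ)) := by exact_mod_cast hrs
    _ ≤ S ω a c := le_S ω hrn ⟨hrn, hrh, hrl⟩

lemma S_trans (ω : X → X → WithTop ℤ) (a b c : X)
    (hab : S ω b a < S ω a b) (hbc : S ω c b < S ω b c) : S ω c a < S ω a c := by
  by_contra hcon
  push_neg at hcon
  have t1 := S_triangle ω a b c
  have t2 := S_triangle ω c a b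
  have t3 := S_triangle ω b c a
  rcases le_total (S ω a b) (S ω b c) with hc | hc
  · have h1 : S ω a b ≤ S ω a c := by rw [min_eq_left hc] at t1; exact t1
    have h2 : S ω a b ≤ S ω c a := le_trans h1 hcon
    have h3 : S ω a b ≤ S ω b a := le_trans (le_min hc h2) t3
    exact absurd h3 (not_le.2 hab)
  · have h1 : S ω b c ≤ S ω a c := by rw [min_eq_right hc] at t1; exact t1
    have h2 : S ω b c ≤ S ω c a := le_trans h1 hcon
    have h3 : S ω b c ≤ S ω c b := le_trans (le_min h2 hc) t2
    exact absurd h3 (not_le.2 hbc)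

theorem stmt3 {X : Type} [Fintype X] [DecidableEq X]
    (ω : X → X → ℤ) (hskew : ∀ x y : X, x ≠ y → ω x y = - ω y x) (x : X) :
    ((∀ y : X, y ≠ x → S (ofInt ω) y x ≤ S (ofInt ω) x y) ∧
      (∀ z : X, (∀ y : X, y ≠ z → S (ofInt ω) y z ≤ S (ofInt ω) z y) → z = x))
    ↔ (∀ y : X, y ≠ x → S (ofInt ω) y x < S (ofInt ω) x y) := by
  set Ω := ofInt ω with hΩ
  constructor
  · rintro ⟨hw, hu⟩ y hy
    have hdom : ∀ z : X, z ≠ x → ∃ w : X, S Ω z w < S Ω w z := by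
      intro z hz
      by_contra hc
      push_neg at hc
      exact hz (hu z (fun y _ => hc y))
    let r : X → X → Prop := fun a b => S Ω b a < S Ω a b
    haveI : IsTrans X r := ⟨fun a b c hab hbc => S_trans Ω a b c hab hbc⟩
    haveI : IsIrrefl X r := ⟨fun a => lt_irrefl _⟩
    have hwf : WellFounded r := Finite.wellFounded_of_trans_of_irrefl r
    have key : ∀ z : X, z = x ∨ r x z := by
      intro z
      induction z using WellFounded.induction hwf with
      | _ z ih =>
        by_cases hz : z = x
        · exact Or.inl hz
        · obtain ⟨w, hwz⟩ := hdom z hz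
          rcases ih w hwz with rfl | hxw
          · exact Or.inr hwz
          · exact Or.inr (S_trans Ω x w z hxw hwz)
    rcases key y with rfl | h
    · exact absurd rfl hy
    · exact h
  · intro hs
    refine ⟨fun y hy => (hs y hy).le, fun z hz => ?_⟩
    by_contra hne
    exact absurd (hz x (Ne.symm hne)) (not_le.2 (hs z hne))

end Schulze
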